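/- (Corollary) Let A be a Hurwitz d×d real matrix and x, y ∈ ℝ^d. If L_y = L_x, then T_cut(y) = T_cut(x). -/

import Mathlib

open Matrix Set Filter Topology

noncomputable section

/-- A real square matrix is *Hurwitz* if all its (complex) eigenvalues,
i.e. the roots of its characteristic polynomial over `ℂ`, have negative real part. -/
def IsHurwitz {d : ℕ} (A : Matrix (Fin d) (Fin d) ℝ) : Prop :=
  ∀ μ : ℂ, (A.map (algebraMap ℝ ℂ)).charpoly.IsRoot μ → μ.re < 0

/-- The trajectory `x(t) = e^{tA} x₀` of the linear system `ẋ = Ax`. -/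
def traj {d : ℕ} (A : Matrix (Fin d) (Fin d) ℝ) (x₀ : Fin d → ℝ) (t : ℝ) : Fin d → ℝ :=
  (NormedSpace.exp (t • A)).mulVec x₀

/-- Symmetrized convex hull `co_s X = co (X ∪ (−X))`. -/
def symCo {d : ℕ} (X : Set (Fin d → ℝ)) : Set (Fin d → ℝ) :=
  convexHull ℝ (X ∪ (-X))

/-- `G = co_s {x(t) : t ≥ 0}`, the symmetrized convex hull of the whole trajectory. -/
def trajHull {d : ℕ} (A : Matrix (Fin d) (Fin d) ℝ) (x₀ : Fin d → ℝ) : Set (Fin d → ℝ) :=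
  symCo (traj A x₀ '' Ici (0:ℝ))

/-- `T > 0` is a *cut tail point* of the trajectory starting at `x₀` if `x(t)` lies in the
relative (intrinsic) interior of `G` for every `t ≥ T`. -/
def IsCutTailPoint {d : ℕ} (A : Matrix (Fin d) (Fin d) ℝ) (x₀ : Fin d → ℝ) (T : ℝ) : Prop :=
  0 < T ∧ ∀ t, T ≤ t → traj A x₀ t ∈ intrinsicInterior ℝ (trajHull A x₀)

/-- `T_cut(x₀)`: the infimum of all cut tail points of the trajectory starting at `x₀`. -/
def Tcut {d : ℕ} (A : Matrix (Fin d) (Fin d) ℝ) (x₀ : Fin d → ℝ) : ℝ :=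
  sInf {T | IsCutTailPoint A x₀ T}

/-- `L_{x₀}`: the minimal `A`-invariant linear subspace of `ℝ^d` containing `x₀`. -/
def minInv {d : ℕ} (A : Matrix (Fin d) (Fin d) ℝ) (x₀ : Fin d → ℝ) : Submodule ℝ (Fin d → ℝ) :=
  sInf {L | x₀ ∈ L ∧ ∀ v ∈ L, A.mulVec v ∈ L}

/-- A point `x₀` is *generic* if `dim L_{x₀}` equals the degree of the minimal polynomial of `A`. -/
def IsGeneric {d : ℕ} (A : Matrix (Fin d) (Fin d) ℝ) (x₀ : Fin d → ℝ) : Prop :=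
  Module.finrank ℝ (minInv A x₀) = (minpoly ℝ A).natDegree


section Aux

variable {d : ℕ}

private lemma image_intrinsicInterior_cle (e : (Fin d → ℝ) ≃L[ℝ] (Fin d → ℝ))
    (s : Set (Fin d → ℝ)) :
    intrinsicInterior ℝ (⇑e '' s) = ⇑e '' intrinsicInterior ℝ s := by
  have hspan : ((affineSpan ℝ (⇑e '' s) : AffineSubspace ℝ (Fin d → ℝ)) : Set (Fin d → ℝ))
      = ⇑e '' ((affineSpan ℝ s : AffineSubspace ℝ (Fin d → ℝ)) : Set (Fin d → ℝ)) := by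
    have h1 : ⇑e '' s = ⇑((e : (Fin d → ℝ) →ₗ[ℝ] (Fin d → ℝ)).toAffineMap) '' s := rfl
    rw [h1, ← AffineSubspace.map_span, AffineSubspace.coe_map]
    rfl
  let f : ↥(affineSpan ℝ s) ≃ₜ ↥(affineSpan ℝ (⇑e '' s)) :=
    (e.toHomeomorph.image ((affineSpan ℝ s : AffineSubspace ℝ (Fin d → ℝ)) :
      Set (Fin d → ℝ))).trans (Homeomorph.setCongr hspan.symm)
  have hpre : (Subtype.val ⁻¹' (⇑e '' s) : Set ↥(affineSpan ℝ (⇑e '' s)))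
      = ⇑f '' (Subtype.val ⁻¹' s) := by
    ext b
    constructor
    · rintro ⟨p, hp, hep⟩
      exact ⟨⟨p, subset_affineSpan ℝ s hp⟩, hp, Subtype.ext hep⟩
    · rintro ⟨a, ha, rfl⟩
      exact ⟨a.1, ha, rfl⟩
  show Subtype.val '' interior (Subtype.val ⁻¹' (⇑e '' s)) = ⇑e '' intrinsicInterior ℝ s
  rw [hpre, ← f.image_interior, Set.image_image]
  show (fun a => e a.1) '' interior (Subtype.val ⁻¹' s) = _
  rw [intrinsicInterior, Set.image_image]

private lemma minInv_mem (A : Matrix (Fin d) (Fin d) ℝ) (x : Fin d → ℝ) : x ∈ minInv A x :=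
  Submodule.mem_sInf.2 fun _ hL => hL.1

private lemma minInv_le_span (A : Matrix (Fin d) (Fin d) ℝ) (x : Fin d → ℝ) :
    minInv A x ≤ Submodule.span ℝ (Set.range fun n : ℕ => (A ^ n).mulVec x) := by
  apply sInf_le
  refine ⟨Submodule.subset_span ⟨0, by simp⟩, ?_⟩
  intro v hv
  induction hv using Submodule.span_induction with
  | mem p hp =>
      obtain ⟨n, rfl⟩ := hp
      exact Submodule.subset_span ⟨n + 1, by rw [Matrix.mulVec_mulVec, ← pow_succ']⟩
  | zero => simp
  | add u w _ _ hu hw => rw [Matrix.mulVec_add]; exact add_mem hu hw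
  | smul c u _ hu => rw [Matrix.mulVec_smul]; exact Submodule.smul_mem _ _ hu

private lemma exists_commute (A : Matrix (Fin d) (Fin d) ℝ) {x y : Fin d → ℝ}
    (hy : y ∈ minInv A x) :
    ∃ B : Matrix (Fin d) (Fin d) ℝ, Commute A B ∧ B.mulVec x = y := by
  have h := minInv_le_span A x hy
  rw [Finsupp.mem_span_range_iff_exists_finsupp] at h
  obtain ⟨c, hc⟩ := h
  refine ⟨∑ n ∈ c.support, c n • A ^ n, ?_, ?_⟩
  · exact Commute.sum_right _ _ _ fun n _ => ((Commute.refl A).pow_right n).smul_right (c n)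
  · have key : ∀ s : Finset ℕ, (∑ n ∈ s, c n • A ^ n).mulVec x
        = ∑ n ∈ s, c n • ((A ^ n).mulVec x) := by
      intro s
      induction s using Finset.induction with
      | empty => simp
      | insert _ _ h ih =>
          rw [Finset.sum_insert h, Finset.sum_insert h, Matrix.add_mulVec,
            Matrix.smul_mulVec, ih]
    rw [key, ← hc, Finsupp.sum]

private lemma traj_mulVec (A B : Matrix (Fin d) (Fin d) ℝ) (hc : Commute A B)
    (x : Fin d → ℝ) (t : ℝ) :
    traj A (B.mulVec x) t = B.mulVec (traj A x t) := by
  unfold traj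
  rw [Matrix.mulVec_mulVec, Matrix.mulVec_mulVec, ((hc.smul_left t).exp_left).eq]

private lemma cutIff (A : Matrix (Fin d) (Fin d) ℝ) (x y : Fin d → ℝ)
    (hy : y ∈ minInv A x) (hx : x ∈ minInv A y) (T : ℝ) :
    IsCutTailPoint A y T ↔ IsCutTailPoint A x T := by
  obtain ⟨B, hAB, hBx⟩ := exists_commute A hy
  obtain ⟨P, hAP, hPy⟩ := exists_commute A hx
  have hBtraj : ∀ t : ℝ, B.mulVec (traj A x t) = traj A y t := fun t => by
    rw [← traj_mulVec A B hAB, hBx]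
  have hPtraj : ∀ t : ℝ, P.mulVec (traj A y t) = traj A x t := fun t => by
    rw [← traj_mulVec A P hAP, hPy]
  set X := traj A x '' Ici (0:ℝ) with hX
  set Y := traj A y '' Ici (0:ℝ) with hY
  set U := Submodule.span ℝ X with hU
  set V := Submodule.span ℝ Y with hV
  have hXY : (fun v => B.mulVec v) '' X = Y := by
    rw [hX, hY, ← Set.image_comp]
    exact Set.image_congr fun t _ => hBtraj t
  have hYX : (fun v => P.mulVec v) '' Y = X := by
    rw [hX, hY, ← Set.image_comp]
    exact Set.image_congr fun t _ => hPtraj t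
  have hmapU : U.map B.mulVecLin = V := by
    rw [hU, hV, Submodule.map_span, ← hXY]; rfl
  have hmapV : V.map P.mulVecLin = U := by
    rw [hU, hV, Submodule.map_span, ← hYX]; rfl
  have hPB : ∀ v ∈ U, P.mulVec (B.mulVec v) = v := by
    intro v hv
    induction hv using Submodule.span_induction with
    | mem p hp =>
        obtain ⟨t, _, rfl⟩ := hp
        rw [hBtraj, hPtraj]
    | zero => simp
    | add u w _ _ hu hw => rw [Matrix.mulVec_add, Matrix.mulVec_add, hu, hw]
    | smul c u _ hu => rw [Matrix.mulVec_smul, Matrix.mulVec_smul, hu]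
  have hBP : ∀ v ∈ V, B.mulVec (P.mulVec v) = v := by
    intro v hv
    induction hv using Submodule.span_induction with
    | mem p hp =>
        obtain ⟨t, _, rfl⟩ := hp
        rw [hPtraj, hBtraj]
    | zero => simp
    | add u w _ _ hu hw => rw [Matrix.mulVec_add, Matrix.mulVec_add, hu, hw]
    | smul c u _ hu => rw [Matrix.mulVec_smul, Matrix.mulVec_smul, hu]
  have hβ : ∀ u ∈ U, B.mulVecLin u ∈ V := fun u hu => hmapU ▸ Submodule.mem_map_of_mem hu
  have hπ : ∀ v ∈ V, P.mulVecLin v ∈ U := fun v hv => hmapV ▸ Submodule.mem_map_of_mem hv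
  let fe : U ≃ₗ[ℝ] V :=
    LinearEquiv.ofLinear (B.mulVecLin.restrict hβ) (P.mulVecLin.restrict hπ)
      (LinearMap.ext fun v => Subtype.ext (hBP v.1 v.2))
      (LinearMap.ext fun u => Subtype.ext (hPB u.1 u.2))
  obtain ⟨U', hU'⟩ := Submodule.exists_isCompl U
  obtain ⟨V', hV'⟩ := Submodule.exists_isCompl V
  have hrk : Module.finrank ℝ U' = Module.finrank ℝ V' := by
    have h1 := Submodule.finrank_add_eq_of_isCompl hU'
    have h2 := Submodule.finrank_add_eq_of_isCompl hV'
    have h3 := fe.finrank_eq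
    omega
  let ge : U' ≃ₗ[ℝ] V' := LinearEquiv.ofFinrankEq _ _ hrk
  let E : (Fin d → ℝ) ≃ₗ[ℝ] (Fin d → ℝ) :=
    (Submodule.prodEquivOfIsCompl U U' hU').symm ≪≫ₗ (fe.prodCongr ge) ≪≫ₗ
      (Submodule.prodEquivOfIsCompl V V' hV')
  have hE : ∀ u ∈ U, E u = B.mulVec u := by
    intro u hu
    show (Submodule.prodEquivOfIsCompl V V' hV')
        ((fe.prodCongr ge) ((Submodule.prodEquivOfIsCompl U U' hU').symm u)) = _
    rw [show u = ((⟨u, hu⟩ : U) : Fin d → ℝ) from rfl,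
      Submodule.prodEquivOfIsCompl_symm_apply_left]
    simp only [LinearEquiv.prodCongr_apply, map_zero, Submodule.coe_prodEquivOfIsCompl',
      Submodule.coe_zero, add_zero]
    rfl
  let Ec : (Fin d → ℝ) ≃L[ℝ] (Fin d → ℝ) := E.toContinuousLinearEquiv
  have hEc : ∀ u ∈ U, Ec u = B.mulVec u := hE
  have hEX : ⇑Ec '' X = Y := by
    rw [← hXY]
    exact Set.image_congr fun p hp => hEc p (Submodule.subset_span hp)
  have hEnegX : ⇑Ec '' (-X) = -(⇑Ec '' X) := by
    ext v
    simp only [Set.mem_image, Set.mem_neg]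
    constructor
    · rintro ⟨p, hp, rfl⟩
      exact ⟨-p, hp, map_neg Ec p⟩
    · rintro ⟨q, hq, hqv⟩
      exact ⟨-q, by simpa using hq, by rw [map_neg, hqv, neg_neg]⟩
  have hhull : ⇑Ec '' trajHull A x = trajHull A y := by
    show ⇑Ec '' convexHull ℝ (X ∪ -X) = convexHull ℝ (Y ∪ -Y)
    rw [show ⇑Ec = ⇑(Ec : (Fin d → ℝ) →ₗ[ℝ] (Fin d → ℝ)) from rfl,
      LinearMap.image_convexHull, Set.image_union]
    rw [show ⇑(Ec : (Fin d → ℝ) →ₗ[ℝ] (Fin d → ℝ)) = ⇑Ec from rfl, hEnegX, hEX]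
  have hEtraj : ∀ t : ℝ, 0 ≤ t → Ec (traj A x t) = traj A y t := by
    intro t ht
    rw [hEc _ (Submodule.subset_span ⟨t, ht, rfl⟩), hBtraj]
  have hmem : ∀ t : ℝ, 0 ≤ t →
      (traj A y t ∈ intrinsicInterior ℝ (trajHull A y)
        ↔ traj A x t ∈ intrinsicInterior ℝ (trajHull A x)) := by
    intro t ht
    rw [← hhull, image_intrinsicInterior_cle, ← hEtraj t ht]
    exact ⟨fun h => by
        obtain ⟨p, hp, hep⟩ := h
        rwa [← Ec.injective hep], fun h => Set.mem_image_of_mem _ h⟩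
  constructor
  · rintro ⟨hT, hmemT⟩
    exact ⟨hT, fun t htT => (hmem t (le_of_lt (lt_of_lt_of_le hT htT))).1 (hmemT t htT)⟩
  · rintro ⟨hT, hmemT⟩
    exact ⟨hT, fun t htT => (hmem t (le_of_lt (lt_of_lt_of_le hT htT))).2 (hmemT t htT)⟩

end Aux

/-- (Corollary) If `L_y = L_x`, then `T_cut(y) = T_cut(x)`. -/
theorem Tcut_eq_of_minInv_eq {d : ℕ} (A : Matrix (Fin d) (Fin d) ℝ) (hA : IsHurwitz A)
    (x y : Fin d → ℝ) (h : minInv A y = minInv A x) :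
    Tcut A y = Tcut A x := by
  have hy : y ∈ minInv A x := h ▸ minInv_mem A y
  have hx : x ∈ minInv A y := h.symm ▸ minInv_mem A x
  unfold Tcut
  congr 1
  ext T
  exact cutIff A x y hy hx T
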